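/- Let 𝕂 be a subfield of ℂ, q ≥ 1, A ∈ M_q(𝕂(z)), and let α ∈ 𝕂* not be a singularity of the differential system Y' = AY. Then for any P_1, …, P_q ∈ 𝕂[z], the image of 𝓡[P_1,…,P_q] under the isomorphism 𝓢 → ℂ^q, Y ↦ Y(α), is a subspace of ℂ^q defined over 𝕂. -/

import Mathlib

open Polynomial

noncomputable section

/-- The domain on which we work with (single-valued) solutions of the system
`Y' = (Anum/den)Y`: the slit plane minus the singularities of the system. -/
def sysDomain (den : Polynomial ℂ) : Set ℂ :=
  {z : ℂ | den.eval z ≠ 0} ∩ Complex.slitPlane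

/-- The set of solutions of the differential system `Y' = (Anum/den) Y` (solutions are
normalized to vanish off the domain, so that this is a `ℂ`-vector space). -/
def solSet (q : ℕ) (Anum : Matrix (Fin q) (Fin q) (Polynomial ℂ)) (den : Polynomial ℂ) :
    Set (ℂ → Fin q → ℂ) :=
  {Y | (∀ z ∈ sysDomain den, ∀ i, HasDerivAt (fun w => Y w i)
        (∑ j, (Anum i j).eval z / den.eval z * Y z j) z) ∧
      ∀ z ∉ sysDomain den, Y z = 0}

/-- `𝓢`, the space of solutions of `Y' = (Anum/den) Y`. -/
def SolSpace (q : ℕ) (Anum : Matrix (Fin q) (Fin q) (Polynomial ℂ)) (den : Polynomial ℂ) :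
    Submodule ℂ (ℂ → Fin q → ℂ) :=
  Submodule.span ℂ (solSet q Anum den)

/-- `𝓡[P₁,…,P_q]`, the space of solutions `Y` of `Y' = (Anum/den) Y` whose remainder
`R(Y) = ∑ᵢ Pᵢ yᵢ` vanishes identically. -/
def RSpace (q : ℕ) (Anum : Matrix (Fin q) (Fin q) (Polynomial ℂ)) (den : Polynomial ℂ)
    (P : Fin q → Polynomial ℂ) : Submodule ℂ (ℂ → Fin q → ℂ) :=
  Submodule.span ℂ
    {Y | Y ∈ solSet q Anum den ∧ ∀ z ∈ sysDomain den, ∑ i, (P i).eval z * Y z i = 0}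

/-- The functions `P_{k,i}` obtained by applying `(d/dz + ᵗA)^k` to `(P₁,…,P_q)`
(index shift: `PkFun … k` is the paper's `P_{k+1,·}`), so that
`R(Y)^{(k)} = ∑ᵢ PkFun k i · yᵢ`. -/
def PkFun (q : ℕ) (Anum : Matrix (Fin q) (Fin q) (Polynomial ℂ)) (den : Polynomial ℂ)
    (P : Fin q → Polynomial ℂ) : ℕ → Fin q → ℂ → ℂ
  | 0 => fun i z => (P i).eval z
  | k + 1 => fun i z => deriv (PkFun q Anum den P k i) z
      + ∑ j, (Anum j i).eval z / den.eval z * PkFun q Anum den P k j z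

/-- A function belongs to the Nilsson class at `0` and vanishes at `0` with order at
least `T`: it has a Nilsson expansion on a slit punctured neighbourhood of `0` in which
all exponents have real part at least `T`. -/
def NilssonVanishes (u : ℂ → ℂ) (T : ℝ) : Prop :=
  ∃ (n : ℕ) (e : Fin n → ℂ) (l : Fin n → ℕ) (h : Fin n → ℂ → ℂ) (r : ℝ), 0 < r ∧
    (∀ k, AnalyticOnNhd ℂ (h k) (Metric.ball (0 : ℂ) r)) ∧ (∀ k, T ≤ (e k).re) ∧
    ∀ z ∈ Metric.ball (0 : ℂ) r ∩ Complex.slitPlane,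
      u z = ∑ k : Fin n, h k z * z ^ (e k) * (Complex.log z) ^ (l k)

/-- Evaluation at a point `α`, as a linear map on vector-valued functions. -/
def evalMap (q : ℕ) (α : ℂ) : (ℂ → Fin q → ℂ) →ₗ[ℂ] (Fin q → ℂ) where
  toFun Y := Y α
  map_add' _ _ := rfl
  map_smul' _ _ := rfl


section AuxLemmas
open Convex Set Metric

theorem aux_convex_diff_countable {s : Set ℂ} (hconv : Convex ℝ s) (hopen : IsOpen s)
    {Z : Set ℂ} (hZ : Z.Countable) (hne : s.Nonempty) : IsPathConnected (s \ Z) := by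
  have hdense : Dense Zᶜ := hZ.dense_compl ℝ
  obtain ⟨a, has, haZ⟩ : (s ∩ Zᶜ).Nonempty := hdense.inter_open_nonempty s hopen hne
  refine ⟨a, ⟨has, haZ⟩, ?_⟩
  rintro b ⟨hbs, hbZ⟩
  rcases eq_or_ne a b with rfl | hab
  · exact JoinedIn.refl ⟨has, haZ⟩
  set c := (2 : ℝ)⁻¹ • (a + b) with hc_def
  set x := (2 : ℝ)⁻¹ • (b - a) with hx_def
  have Ia : c - x = a := by simp only [hc_def, hx_def]; module
  have Ib : c + x = b := by simp only [hc_def, hx_def]; module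
  have hcs : c ∈ s := by
    have := hconv has hbs (by norm_num : (0:ℝ) ≤ 2⁻¹) (by norm_num : (0:ℝ) ≤ 2⁻¹) (by norm_num)
    rw [hc_def, smul_add]
    exact this
  have x_ne : x ≠ 0 := by
    simp only [hx_def]
    intro h
    apply hab
    rcases smul_eq_zero.1 h with h | h
    · norm_num at h
    · rw [sub_eq_zero] at h; exact h.symm
  set y := Complex.I * x with hy_def
  have hy : LinearIndependent ℝ ![x, y] := by
    rw [LinearIndependent.pair_iff]
    intro u v huv
    have h : ((u : ℂ) + v * Complex.I) * x = 0 := by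
      rw [← huv]; push_cast [Complex.real_smul, hy_def]; ring
    rcases mul_eq_zero.1 h with h | h
    · have hre : ((u:ℂ) + v*Complex.I).re = 0 := by rw [h]; simp
      have him : ((u:ℂ) + v*Complex.I).im = 0 := by rw [h]; simp
      simp at hre him
      exact ⟨hre, him⟩
    · exact absurd h x_ne
  obtain ⟨ε, hε, hball⟩ : ∃ ε > 0, ball c ε ⊆ s := Metric.isOpen_iff.1 hopen c hcs
  set δ := ε / (‖y‖ + 1) with hδ_def
  have hδ : 0 < δ := div_pos hε (by positivity)
  have hmem : ∀ t ∈ Ioo (0:ℝ) δ, c + t • y ∈ s := by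
    intro t ht
    apply hball
    rw [mem_ball, dist_eq_norm, add_sub_cancel_left, norm_smul]
    calc ‖t‖ * ‖y‖ ≤ ‖t‖ * (‖y‖ + 1) := by
          apply mul_le_mul_of_nonneg_left (by linarith [norm_nonneg y]) (norm_nonneg t)
      _ < ε := by
          rw [Real.norm_eq_abs, abs_of_pos ht.1]
          have h2 := ht.2
          rw [hδ_def, lt_div_iff₀ (by positivity)] at h2
          linarith
  have A : Set.Countable {t : ℝ | ([c + x -[ℝ] c + t • y] ∩ Z).Nonempty} := by
    apply countable_setOf_nonempty_of_disjoint _ (fun t => inter_subset_right) hZ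
    intro t t' htt'
    apply disjoint_iff_inter_eq_empty.2
    have N : {c + x} ∩ Z = ∅ := by
      simpa only [singleton_inter_eq_empty, mem_compl_iff, Ib] using hbZ
    rw [inter_assoc, inter_comm Z, inter_assoc, inter_self, ← inter_assoc, ← subset_empty_iff, ← N]
    apply inter_subset_inter_left
    exact Eq.subset (segment_inter_eq_endpoint_of_linearIndependent_of_ne hy htt'.symm c)
  have B : Set.Countable {t : ℝ | ([c - x -[ℝ] c + t • y] ∩ Z).Nonempty} := by
    apply countable_setOf_nonempty_of_disjoint _ (fun t => inter_subset_right) hZ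
    intro t t' htt'
    apply disjoint_iff_inter_eq_empty.2
    have N : {c - x} ∩ Z = ∅ := by
      simpa only [singleton_inter_eq_empty, mem_compl_iff, Ia] using haZ
    rw [inter_assoc, inter_comm Z, inter_assoc, inter_self, ← inter_assoc, ← subset_empty_iff, ← N]
    apply inter_subset_inter_left
    rw [sub_eq_add_neg _ x]
    refine Eq.subset (segment_inter_eq_endpoint_of_linearIndependent_of_ne ?_ htt'.symm c)
    convert hy.units_smul ![-1, 1]
    simp [← List.ofFn_inj]
    rfl
    rfl
  obtain ⟨t, htI, htAB⟩ : (Ioo (0:ℝ) δ ∩ (({t : ℝ | ([c + x -[ℝ] c + t • y] ∩ Z).Nonempty}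
      ∪ {t : ℝ | ([c - x -[ℝ] c + t • y] ∩ Z).Nonempty})ᶜ)).Nonempty :=
    ((A.union B).dense_compl ℝ).inter_open_nonempty _ isOpen_Ioo ⟨δ/2, by constructor <;> [linarith; linarith]⟩
  simp only [compl_union, mem_inter_iff, mem_compl_iff, mem_setOf_eq,
    not_nonempty_iff_eq_empty] at htAB
  set z := c + t • y with hz_def
  have hzs : z ∈ s := hmem t htI
  have hseg_b : [b -[ℝ] z] ⊆ s \ Z := by
    intro w hw
    refine ⟨hconv.segment_subset hbs hzs hw, ?_⟩
    intro hwZ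
    have : w ∈ [c + x -[ℝ] c + t • y] ∩ Z := ⟨by rwa [Ib], hwZ⟩
    rw [htAB.1] at this
    exact this
  have hseg_a : [a -[ℝ] z] ⊆ s \ Z := by
    intro w hw
    refine ⟨hconv.segment_subset has hzs hw, ?_⟩
    intro hwZ
    have : w ∈ [c - x -[ℝ] c + t • y] ∩ Z := ⟨by rwa [Ia], hwZ⟩
    rw [htAB.2] at this
    exact this
  exact (JoinedIn.of_segment_subset hseg_a).trans (JoinedIn.of_segment_subset hseg_b).symm


theorem aux_slitPlane_diff_countable {Z : Set ℂ} (hZ : Z.Countable) :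
    IsPreconnected (Complex.slitPlane \ Z) := by
  set A := {z : ℂ | 0 < z.im} with hA
  set B := {z : ℂ | z.im < 0} with hB
  set C := {z : ℂ | 0 < z.re} with hC
  have hAo : IsOpen A := isOpen_lt continuous_const Complex.continuous_im
  have hBo : IsOpen B := isOpen_lt Complex.continuous_im continuous_const
  have hCo : IsOpen C := isOpen_lt continuous_const Complex.continuous_re
  have hApc : IsPathConnected (A \ Z) :=
    aux_convex_diff_countable (convex_halfSpace_im_gt 0) hAo hZ ⟨Complex.I, by simp [hA]⟩
  have hBpc : IsPathConnected (B \ Z) :=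
    aux_convex_diff_countable (convex_halfSpace_im_lt 0) hBo hZ ⟨-Complex.I, by simp [hB]⟩
  have hCpc : IsPathConnected (C \ Z) :=
    aux_convex_diff_countable (convex_halfSpace_re_gt 0) hCo hZ ⟨1, by simp [hC]⟩
  have hACne : ((A \ Z) ∩ (C \ Z)).Nonempty := by
    have : Dense Zᶜ := hZ.dense_compl ℝ
    obtain ⟨w, hw1, hw2⟩ := this.inter_open_nonempty (A ∩ C) (hAo.inter hCo)
      ⟨1 + Complex.I, by simp [hA, hC]⟩
    exact ⟨w, ⟨hw1.1, hw2⟩, ⟨hw1.2, hw2⟩⟩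
  have hACpc : IsPathConnected ((A \ Z) ∪ (C \ Z)) := hApc.union hCpc hACne
  have hBCne : ((B \ Z) ∩ ((A \ Z) ∪ (C \ Z))).Nonempty := by
    have : Dense Zᶜ := hZ.dense_compl ℝ
    obtain ⟨w, hw1, hw2⟩ := this.inter_open_nonempty (B ∩ C) (hBo.inter hCo)
      ⟨1 - Complex.I, by simp [hB, hC]⟩
    exact ⟨w, ⟨hw1.1, hw2⟩, Or.inr ⟨hw1.2, hw2⟩⟩
  have hpc : IsPathConnected ((B \ Z) ∪ ((A \ Z) ∪ (C \ Z))) := hBpc.union hACpc hBCne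
  have heq : Complex.slitPlane \ Z = (B \ Z) ∪ ((A \ Z) ∪ (C \ Z)) := by
    ext z
    simp only [mem_diff, mem_union, Complex.mem_slitPlane_iff, hA, hB, hC, mem_setOf_eq]
    constructor
    · rintro ⟨h1, h2⟩
      rcases h1 with h | h
      · exact Or.inr (Or.inr ⟨h, h2⟩)
      · rcases lt_or_gt_of_ne h with h | h
        · exact Or.inl ⟨h, h2⟩
        · exact Or.inr (Or.inl ⟨h, h2⟩)
    · rintro (⟨h, h2⟩ | ⟨h, h2⟩ | ⟨h, h2⟩)
      · exact ⟨Or.inr h.ne, h2⟩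
      · exact ⟨Or.inr h.ne', h2⟩
      · exact ⟨Or.inl h, h2⟩
  rw [heq]
  exact hpc.isConnected.isPreconnected

end AuxLemmas


def kerSubmodule (q : ℕ) (c : ℕ → Fin q → ℂ) : Submodule ℂ (Fin q → ℂ) where
  carrier := {v | ∀ k, ∑ i, c k i * v i = 0}
  zero_mem' := by intro k; simp
  add_mem' := by
    intro v w hv hw k
    have : ∑ i, c k i * (v + w) i = (∑ i, c k i * v i) + ∑ i, c k i * w i := by
      rw [← Finset.sum_add_distrib]
      exact Finset.sum_congr rfl fun i _ => by simp [mul_add]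
    rw [this, hv k, hw k, add_zero]
  smul_mem' := by
    intro a v hv k
    have : ∑ i, c k i * (a • v) i = a * ∑ i, c k i * v i := by
      rw [Finset.mul_sum]
      exact Finset.sum_congr rfl fun i _ => by simp [smul_eq_mul]; ring
    rw [this, hv k, mul_zero]

theorem mem_kerSubmodule_iff (q : ℕ) (c : ℕ → Fin q → ℂ) (v : Fin q → ℂ) :
    v ∈ kerSubmodule q c ↔ ∀ k, ∑ i, c k i * v i = 0 := Iff.rfl

theorem span_K_of_ker (K : Subfield ℂ) (q : ℕ) (c : ℕ → Fin q → ℂ) (hc : ∀ k i, c k i ∈ K) :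
    ∃ s : Set (Fin q → ℂ), (∀ v ∈ s, ∀ i, v i ∈ K) ∧
      Submodule.span ℂ s = kerSubmodule q c := by
  classical
  refine ⟨{v | (∀ i, v i ∈ K) ∧ v ∈ kerSubmodule q c}, fun v hv => hv.1, ?_⟩
  apply le_antisymm
  · rw [Submodule.span_le]; exact fun v hv => hv.2
  · intro w hw
    set b := Module.Basis.ofVectorSpace K ℂ with hb
    set T := Finset.univ.biUnion (fun i : Fin q => (b.repr (w i)).support) with hT
    set vj : _ → Fin q → ℂ := fun j i => ((b.repr (w i)) j : ℂ) with hvj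
    have hmemW : ∀ j, vj j ∈ kerSubmodule q c := by
      intro j k
      have h2 : (∑ i, (⟨c k i, hc k i⟩ : K) • b.repr (w i)) = 0 := by
        have : ∑ i, (⟨c k i, hc k i⟩ : K) • b.repr (w i)
            = b.repr (∑ i, (⟨c k i, hc k i⟩ : K) • w i) := by
          rw [map_sum]
          exact Finset.sum_congr rfl fun i _ => (map_smul _ _ _).symm
        rw [this]
        have hz : (∑ i, (⟨c k i, hc k i⟩ : K) • w i) = 0 := by
          have : ∑ i, (⟨c k i, hc k i⟩ : K) • w i = ∑ i, c k i * w i :=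
            Finset.sum_congr rfl fun i _ => Subring.smul_def _ _
          rw [this, hw k]
        rw [hz, map_zero]
      have h3 := congrArg (fun F => F j) h2
      simp only [Finsupp.coe_finset_sum, Finset.sum_apply, Finsupp.smul_apply,
        Finsupp.coe_zero, Pi.zero_apply] at h3
      have h4 : ((∑ i, (⟨c k i, hc k i⟩ : K) • (b.repr (w i)) j : K) : ℂ) = 0 := by
        rw [h3]; simp
      calc ∑ i, c k i * vj j i
          = ((∑ i, (⟨c k i, hc k i⟩ : K) • (b.repr (w i)) j : K) : ℂ) := by
            push_cast
            exact Finset.sum_congr rfl fun i _ => by rw [hvj]; push_cast; rfl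
        _ = 0 := h4
    have hsum : w = ∑ j ∈ T, (b j : ℂ) • vj j := by
      funext i
      have h5 := b.linearCombination_repr (w i)
      rw [Finsupp.linearCombination_apply] at h5
      rw [Finsupp.sum] at h5
      have h6 : ∑ j ∈ (b.repr (w i)).support, (b.repr (w i)) j • b j
          = ∑ j ∈ T, (b.repr (w i)) j • b j := by
        apply Finset.sum_subset
        · intro j hj
          exact Finset.mem_biUnion.2 ⟨i, Finset.mem_univ i, hj⟩
        · intro j _ hj
          rw [Finsupp.notMem_support_iff.1 hj, zero_smul]
      rw [h6] at h5
      rw [Finset.sum_apply]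
      rw [← h5]
      exact Finset.sum_congr rfl fun j _ => by
        simp only [Pi.smul_apply, smul_eq_mul, Subring.smul_def]
        exact mul_comm _ _
    rw [hsum]
    exact Submodule.sum_mem _ fun j _ =>
      Submodule.smul_mem _ _ (Submodule.subset_span ⟨fun i => (b.repr (w i) j).2, hmemW j⟩)


theorem poly_analytic (p : Polynomial ℂ) (s : Set ℂ) : AnalyticOnNhd ℂ (fun z => p.eval z) s :=
  fun z _ => (AnalyticOnNhd.eval_polynomial (𝕜 := ℂ) p) z (Set.mem_univ z)

variable (q : ℕ) (Anum : Matrix (Fin q) (Fin q) (Polynomial ℂ)) (den : Polynomial ℂ)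

theorem isOpen_sysDomain : IsOpen (sysDomain den) := by
  apply IsOpen.inter _ Complex.isOpen_slitPlane
  have : {z : ℂ | den.eval z ≠ 0} = (fun z => den.eval z) ⁻¹' {0}ᶜ := by
    ext z; simp
  rw [this]
  exact isOpen_compl_singleton.preimage den.continuous

theorem Y_analytic {Y : ℂ → Fin q → ℂ} (hY : Y ∈ solSet q Anum den) (i : Fin q) :
    AnalyticOnNhd ℂ (fun z => Y z i) (sysDomain den) := by
  apply DifferentiableOn.analyticOnNhd _ (isOpen_sysDomain den)
  intro z hz
  exact ((hY.1 z hz i).differentiableAt).differentiableWithinAt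

theorem PkFun_analytic (Q : Fin q → Polynomial ℂ) (k : ℕ) (i : Fin q) :
    AnalyticOnNhd ℂ (PkFun q Anum den Q k i) (sysDomain den) := by
  induction k generalizing i with
  | zero => exact poly_analytic _ _
  | succ k ih =>
      show AnalyticOnNhd ℂ (fun z => deriv (PkFun q Anum den Q k i) z
        + ∑ j, (Anum j i).eval z / den.eval z * PkFun q Anum den Q k j z) _
      apply AnalyticOnNhd.add ((ih i).deriv)
      apply Finset.analyticOnNhd_fun_sum
      intro j _
      exact ((poly_analytic _ _).div (poly_analytic _ _) (fun z hz => hz.1)).mul (ih j)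

theorem hasDerivAt_sumPk {Y : ℂ → Fin q → ℂ} (hY : Y ∈ solSet q Anum den)
    (Q : Fin q → Polynomial ℂ) (k : ℕ) {z : ℂ} (hz : z ∈ sysDomain den) :
    HasDerivAt (fun w => ∑ i, PkFun q Anum den Q k i w * Y w i)
      (∑ i, PkFun q Anum den Q (k + 1) i z * Y z i) z := by
  have hP : ∀ i : Fin q, HasDerivAt (PkFun q Anum den Q k i) (deriv (PkFun q Anum den Q k i) z) z :=
    fun i => ((PkFun_analytic q Anum den Q k i) z hz).differentiableAt.hasDerivAt
  have h := HasDerivAt.fun_sum (fun i (_ : i ∈ Finset.univ) => (hP i).mul (hY.1 z hz i))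
  convert h using 1
  · rfl
  · rfl
  · rfl
  show ∑ i, PkFun q Anum den Q (k+1) i z * Y z i = _
  simp only [PkFun, add_mul, Finset.sum_add_distrib, Finset.mul_sum, Finset.sum_mul]
  congr 1
  rw [Finset.sum_comm]
  apply Finset.sum_congr rfl
  intro i _
  apply Finset.sum_congr rfl
  intro j _
  ring

theorem sumPk_analytic {Y : ℂ → Fin q → ℂ} (hY : Y ∈ solSet q Anum den)
    (Q : Fin q → Polynomial ℂ) (k : ℕ) :
    AnalyticOnNhd ℂ (fun z => ∑ i, PkFun q Anum den Q k i z * Y z i) (sysDomain den) := by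
  apply Finset.analyticOnNhd_fun_sum
  intro i _
  exact (PkFun_analytic q Anum den Q k i).mul (Y_analytic q Anum den hY i)

theorem iteratedDeriv_sumPk {Y : ℂ → Fin q → ℂ} (hY : Y ∈ solSet q Anum den)
    (Q : Fin q → Polynomial ℂ) (k : ℕ) {z : ℂ} (hz : z ∈ sysDomain den) :
    iteratedDeriv k (fun w => ∑ i, PkFun q Anum den Q 0 i w * Y w i) z
      = ∑ i, PkFun q Anum den Q k i z * Y z i := by
  induction k generalizing z with
  | zero => simp [iteratedDeriv_zero]
  | succ k ih =>
      rw [iteratedDeriv_succ]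
      have hev : iteratedDeriv k (fun w => ∑ i, PkFun q Anum den Q 0 i w * Y w i)
          =ᶠ[nhds z] (fun w => ∑ i, PkFun q Anum den Q k i w * Y w i) := by
        filter_upwards [(isOpen_sysDomain den).mem_nhds hz] with w hw
        exact ih hw
      rw [hev.deriv_eq]
      exact (hasDerivAt_sumPk q Anum den hY Q k hz).deriv

theorem eventually_zero_of_iteratedDeriv_zero {f : ℂ → ℂ} {α : ℂ} (hf : AnalyticAt ℂ f α)
    (h : ∀ n, iteratedDeriv n f α = 0) : f =ᶠ[nhds α] 0 := by
  obtain ⟨p, hp⟩ := hf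
  obtain ⟨r, hr⟩ := hp
  have hz : ∀ y ∈ Metric.eball (0 : ℂ) r, f (α + y) = 0 := by
    intro y hy
    have hs := hr.hasSum_iteratedFDeriv hy
    have h0 : ∀ n : ℕ, ((n.factorial : ℂ)⁻¹ • (iteratedFDeriv ℂ n f α) fun _ => y) = 0 := by
      intro n
      have : (iteratedFDeriv ℂ n f α fun _ => y) = 0 := by
        have h1 : (fun _ : Fin n => y) = fun _ : Fin n => y • (1 : ℂ) := by
          funext; simp
        rw [h1, (iteratedFDeriv ℂ n f α).map_smul_univ]
        rw [← iteratedDeriv_eq_iteratedFDeriv, h n, smul_zero]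
      rw [this, smul_zero]
    simp only [h0] at hs
    exact hs.unique hasSum_zero
  have hrpos := hr.r_pos
  filter_upwards [EMetric.ball_mem_nhds α hrpos] with w hw
  have : f (α + (w - α)) = 0 := by
    apply hz
    rw [Metric.mem_eball]
    rwa [edist_eq_enorm_sub, sub_zero, ← edist_eq_enorm_sub]
  simpa using this

/-- Forward: all `u_k(α)=0` implies `u_0 ≡ 0` on the domain. -/
theorem sumP_vanishes_of_all_zero (hden : den ≠ 0) {α : ℂ} (hα : α ∈ sysDomain den)
    {Y : ℂ → Fin q → ℂ} (hY : Y ∈ solSet q Anum den) (Q : Fin q → Polynomial ℂ)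
    (h : ∀ k, ∑ i, PkFun q Anum den Q k i α * Y α i = 0) :
    ∀ z ∈ sysDomain den, ∑ i, (Q i).eval z * Y z i = 0 := by
  have hpre : IsPreconnected (sysDomain den) := by
    have : sysDomain den = Complex.slitPlane \ {z : ℂ | den.eval z = 0} := by
      ext z
      simp only [sysDomain, Set.mem_inter_iff, Set.mem_diff, Set.mem_setOf_eq]
      tauto
    rw [this]
    exact aux_slitPlane_diff_countable (den.finite_setOf_isRoot hden).countable
  have hana := sumPk_analytic q Anum den hY Q 0
  have hev : (fun z => ∑ i, PkFun q Anum den Q 0 i z * Y z i) =ᶠ[nhds α] 0 := by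
    apply eventually_zero_of_iteratedDeriv_zero (hana α hα)
    intro n
    rw [iteratedDeriv_sumPk q Anum den hY Q n hα]
    exact h n
  have := hana.eqOn_zero_of_preconnected_of_eventuallyEq_zero hpre hα hev
  intro z hz
  have h2 := this hz
  simpa [PkFun] using h2

/-- Backward: `u_0 ≡ 0` on the domain implies all `u_k` vanish on the domain. -/
theorem all_zero_of_sumP_vanishes {Y : ℂ → Fin q → ℂ} (hY : Y ∈ solSet q Anum den)
    (Q : Fin q → Polynomial ℂ)
    (h : ∀ z ∈ sysDomain den, ∑ i, (Q i).eval z * Y z i = 0) :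
    ∀ k, ∀ z ∈ sysDomain den, ∑ i, PkFun q Anum den Q k i z * Y z i = 0 := by
  intro k
  induction k with
  | zero => intro z hz; simpa [PkFun] using h z hz
  | succ k ih =>
      intro z hz
      have hd := (hasDerivAt_sumPk q Anum den hY Q k hz).deriv
      rw [← hd]
      have hev : (fun w => ∑ i, PkFun q Anum den Q k i w * Y w i) =ᶠ[nhds z]
          (fun _ => (0 : ℂ)) := by
        filter_upwards [(isOpen_sysDomain den).mem_nhds hz] with w hw
        exact ih w hw
      rw [hev.deriv_eq]
      exact deriv_const z 0


def solSubmodule (q : ℕ) (Anum : Matrix (Fin q) (Fin q) (Polynomial ℂ)) (den : Polynomial ℂ) :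
    Submodule ℂ (ℂ → Fin q → ℂ) where
  carrier := solSet q Anum den
  zero_mem' := by
    constructor
    · intro z hz i
      simpa using hasDerivAt_const z (0 : ℂ)
    · intro z _; rfl
  add_mem' := by
    rintro Y W ⟨hY1, hY2⟩ ⟨hW1, hW2⟩
    constructor
    · intro z hz i
      have := (hY1 z hz i).add (hW1 z hz i)
      convert this using 1
      · rfl
      · rfl
      · rfl
      rw [← Finset.sum_add_distrib]
      apply Finset.sum_congr rfl
      intro j _
      show _ * (Y + W) z j = _
      simp only [Pi.add_apply]
      ring
    · intro z hz
      show Y z + W z = 0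
      rw [hY2 z hz, hW2 z hz, add_zero]
  smul_mem' := by
    rintro c Y ⟨hY1, hY2⟩
    constructor
    · intro z hz i
      have := (hY1 z hz i).const_mul c
      convert this using 1
      · rfl
      · rfl
      · rfl
      rw [Finset.mul_sum]
      apply Finset.sum_congr rfl
      intro j _
      show _ * (c • Y) z j = _
      simp only [Pi.smul_apply, smul_eq_mul]
      ring
    · intro z hz
      show c • Y z = 0
      rw [hY2 z hz, smul_zero]

theorem SolSpace_eq (q : ℕ) (Anum : Matrix (Fin q) (Fin q) (Polynomial ℂ)) (den : Polynomial ℂ) :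
    SolSpace q Anum den = solSubmodule q Anum den := by
  apply le_antisymm
  · rw [SolSpace, Submodule.span_le]
    intro Y hY
    exact hY
  · intro Y hY
    exact Submodule.subset_span hY


section KP
variable (K : Subfield ℂ)

def KP (p : Polynomial ℂ) : Prop := ∀ n, p.coeff n ∈ K

theorem KP_add {p r : Polynomial ℂ} (hp : KP K p) (hr : KP K r) : KP K (p + r) := fun n => by
  rw [coeff_add]; exact add_mem (hp n) (hr n)

theorem KP_sub {p r : Polynomial ℂ} (hp : KP K p) (hr : KP K r) : KP K (p - r) := fun n => by
  rw [coeff_sub]; exact sub_mem (hp n) (hr n)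

theorem KP_mul {p r : Polynomial ℂ} (hp : KP K p) (hr : KP K r) : KP K (p * r) := fun n => by
  rw [coeff_mul]
  exact sum_mem fun c _ => mul_mem (hp c.1) (hr c.2)

theorem KP_finsum {ι : Type*} (s : Finset ι) (f : ι → Polynomial ℂ) (hf : ∀ i ∈ s, KP K (f i)) :
    KP K (∑ i ∈ s, f i) := fun n => by
  rw [finset_sum_coeff]
  exact sum_mem fun i hi => hf i hi n

theorem KP_derivative {p : Polynomial ℂ} (hp : KP K p) : KP K (derivative p) := fun n => by
  rw [coeff_derivative]
  exact mul_mem (hp (n + 1)) (by exact_mod_cast natCast_mem K (n + 1))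

theorem KP_C_nat (k : ℕ) : KP K (C (k : ℂ)) := fun n => by
  rw [coeff_C]
  split
  · exact_mod_cast natCast_mem K k
  · exact zero_mem K

theorem KP_eval_mem {p : Polynomial ℂ} (hp : KP K p) {α : ℂ} (hα : α ∈ K) : p.eval α ∈ K := by
  rw [eval_eq_sum_range]
  exact sum_mem fun i _ => mul_mem (hp i) (pow_mem hα i)

end KP

theorem pow_pred_helper (d : ℂ) (hd : d ≠ 0) (k : ℕ) (e : ℂ) :
    (k : ℂ) * d ^ (k - 1) * e = (k : ℂ) * d ^ k * e / d := by
  cases k with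
  | zero => simp
  | succ k =>
      simp only [Nat.add_sub_cancel, pow_succ]
      field_simp

theorem PkFun_rat (K : Subfield ℂ) (q : ℕ) (Anum : Matrix (Fin q) (Fin q) (Polynomial ℂ))
    (den : Polynomial ℂ) (Q : Fin q → Polynomial ℂ)
    (hAK : ∀ i j, KP K (Anum i j)) (hdenK : KP K den) (hQK : ∀ i, KP K (Q i)) (k : ℕ) :
    ∃ N : Fin q → Polynomial ℂ, (∀ i, KP K (N i)) ∧
      ∀ i, ∀ z : ℂ, den.eval z ≠ 0 →
        PkFun q Anum den Q k i z = (N i).eval z / (den.eval z) ^ k := by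
  induction k with
  | zero =>
      exact ⟨Q, hQK, fun i z _ => by simp [PkFun]⟩
  | succ k ih =>
      obtain ⟨N, hNK, hNval⟩ := ih
      refine ⟨fun i => derivative (N i) * den - C (k : ℂ) * N i * derivative den
        + ∑ j, Anum j i * N j, fun i => ?_, fun i z hz => ?_⟩
      · apply KP_add K
        · apply KP_sub K
          · exact KP_mul K (KP_derivative K (hNK i)) hdenK
          · exact KP_mul K (KP_mul K (KP_C_nat K k) (hNK i)) (KP_derivative K hdenK)
        · exact KP_finsum K _ _ fun j _ => KP_mul K (hAK j i) (hNK j)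
      · have hU : IsOpen {w : ℂ | den.eval w ≠ 0} := by
          have : {w : ℂ | den.eval w ≠ 0} = (fun w => den.eval w) ⁻¹' {0}ᶜ := by ext w; simp
          rw [this]
          exact isOpen_compl_singleton.preimage den.continuous
        have hder : deriv (PkFun q Anum den Q k i) z
            = ((derivative (N i)).eval z * (den.eval z) ^ k
              - (N i).eval z * ((k : ℂ) * (den.eval z) ^ (k - 1) * (derivative den).eval z))
              / ((den.eval z) ^ k) ^ 2 := by
          have hev : PkFun q Anum den Q k i =ᶠ[nhds z]
              (fun w => (N i).eval w / (den.eval w) ^ k) := by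
            filter_upwards [hU.mem_nhds hz] with w hw
            exact hNval i w hw
          rw [hev.deriv_eq]
          have h1 : HasDerivAt (fun w => (N i).eval w) ((derivative (N i)).eval z) z :=
            (N i).hasDerivAt z
          have h2 : HasDerivAt (fun w => (den.eval w) ^ k)
              ((k : ℂ) * (den.eval z) ^ (k - 1) * (derivative den).eval z) z := by
            have := ((den.hasDerivAt z).pow k)
            convert this using 1
            · rfl
            · rfl
            · rfl
          exact (h1.div h2 (pow_ne_zero k hz)).deriv
        show deriv (PkFun q Anum den Q k i) z
            + ∑ j, (Anum j i).eval z / den.eval z * PkFun q Anum den Q k j z = _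
        rw [hder]
        have hsum : ∑ j, (Anum j i).eval z / den.eval z * PkFun q Anum den Q k j z
            = (∑ j, (Anum j i).eval z * (N j).eval z) / (den.eval z) ^ (k + 1) := by
          rw [Finset.sum_div]
          apply Finset.sum_congr rfl
          intro j _
          rw [hNval j z hz, div_mul_div_comm, pow_succ']
        rw [hsum]
        simp only [eval_add, eval_sub, eval_mul, eval_C, eval_finset_sum]
        rw [pow_pred_helper _ hz]
        have hd : den.eval z ≠ 0 := hz
        field_simp
        ring

set_option synthInstance.maxHeartbeats 1000000
set_option maxHeartbeats 1000000

/-- **Lemma 3.5.** Let `K` be a subfield of `ℂ`, `A = Anum/den ∈ M_q(K(z))`, and let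
`α ∈ K*` not be a singularity of the system `Y' = AY`. Then for any
`P₁, …, P_q ∈ K[z]`, the image of `𝓡[P₁,…,P_q]` under the evaluation isomorphism
`𝓢 → ℂ^q`, `Y ↦ Y(α)`, is a subspace of `ℂ^q` defined over `K` (it is spanned by
vectors with coordinates in `K`). -/
theorem image_of_RSpace_defined_over_K
    (K : Subfield ℂ) (q : ℕ) (hq : 1 ≤ q)
    (Anum : Matrix (Fin q) (Fin q) (Polynomial ℂ)) (den : Polynomial ℂ) (hden : den ≠ 0)
    (hAK : ∀ i j n, (Anum i j).coeff n ∈ K) (hdenK : ∀ n, den.coeff n ∈ K)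
    (hdim : Module.finrank ℂ ↥(SolSpace q Anum den) = q)
    (α : ℂ) (hαK : α ∈ K) (hα0 : α ≠ 0) (hαreg : den.eval α ≠ 0)
    (P : Fin q → Polynomial ℂ) (hPK : ∀ i n, (P i).coeff n ∈ K) :
    ∃ s : Set (Fin q → ℂ), (∀ v ∈ s, ∀ i, v i ∈ K) ∧
      Submodule.span ℂ s = Submodule.map (evalMap q α) (RSpace q Anum den P) := by
  classical
  by_cases hslit : α ∈ Complex.slitPlane
  · -- main case : `α` is in the domain
    have hαD : α ∈ sysDomain den := ⟨hαreg, hslit⟩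
    set c : ℕ → Fin q → ℂ := fun k i => PkFun q Anum den P k i α with hc_def
    have hcK : ∀ k i, c k i ∈ K := by
      intro k i
      obtain ⟨N, hNK, hNval⟩ := PkFun_rat K q Anum den P (fun i j => hAK i j) hdenK hPK k
      rw [hc_def]
      simp only
      rw [hNval i α hαreg]
      exact div_mem (KP_eval_mem K (hNK i) hαK) (pow_mem (KP_eval_mem K hdenK hαK) k)
    obtain ⟨s, hsK, hs⟩ := span_K_of_ker K q c hcK
    refine ⟨s, hsK, ?_⟩
    rw [hs]
    have hfin : FiniteDimensional ℂ (SolSpace q Anum den) :=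
      Module.finite_of_finrank_pos (by rw [hdim]; omega)
    set L := (evalMap q α).domRestrict (SolSpace q Anum den) with hL_def
    have hkerL : LinearMap.ker L = ⊥ := by
      rw [Submodule.eq_bot_iff]
      rintro ⟨Y, hY⟩ hY0
      have hYs : Y ∈ solSet q Anum den := by
        rw [SolSpace_eq] at hY; exact hY
      have hY0' : Y α = 0 := hY0
      have hYzero : Y = 0 := by
        funext z i
        by_cases hz : z ∈ sysDomain den
        · set Q : Fin q → Polynomial ℂ := fun j => if j = i then 1 else 0 with hQ_def
          have h0 : ∀ k, ∑ i', PkFun q Anum den Q k i' α * Y α i' = 0 := by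
            intro k
            have hcoord : ∀ i', Y α i' = 0 := fun i' => congrFun hY0' i'
            simp [hcoord]
          have hvan := sumP_vanishes_of_all_zero q Anum den hden hαD hYs Q h0 z hz
          have : ∑ j, (Q j).eval z * Y z j = Y z i := by
            rw [hQ_def]
            simp [apply_ite]
          rw [this] at hvan
          exact hvan
        · exact congrFun (hYs.2 z hz) i
      exact Subtype.ext hYzero
    have hinj : Function.Injective L := LinearMap.ker_eq_bot.1 hkerL
    have hsurj : Function.Surjective L :=
      (LinearMap.injective_iff_surjective_of_finrank_eq_finrank
        (by rw [hdim, Module.finrank_fin_fun])).1 hinj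
    apply le_antisymm
    · -- kernel conditions imply membership in the image
      intro v hv
      obtain ⟨⟨Y, hY⟩, hLv⟩ := hsurj v
      have hYs : Y ∈ solSet q Anum den := by
        rw [SolSpace_eq] at hY; exact hY
      have hYα : Y α = v := hLv
      have h0 : ∀ k, ∑ i, PkFun q Anum den P k i α * Y α i = 0 := by
        intro k; rw [hYα]; exact hv k
      have hRY := sumP_vanishes_of_all_zero q Anum den hden hαD hYs P h0
      exact ⟨Y, Submodule.subset_span ⟨hYs, hRY⟩, hYα⟩
    · rw [RSpace, Submodule.map_span, Submodule.span_le]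
      rintro u ⟨Y, ⟨hYsol, hYR⟩, rfl⟩
      intro k
      exact all_zero_of_sumP_vanishes q Anum den hYsol P hYR k α hαD
  · -- degenerate case : `α` is not in the slit plane, the image is trivial
    refine ⟨∅, by simp, ?_⟩
    rw [Submodule.span_empty]
    symm
    rw [RSpace, Submodule.map_span]
    rw [Submodule.span_eq_bot]
    rintro v ⟨Y, ⟨hY1, _⟩, rfl⟩
    show Y α = 0
    exact hY1.2 α (fun hmem => hslit hmem.2)
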